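/- Let F : ℝ^n → ℝ^n be continuously differentiable on a neighborhood of p* with F(p*) = 0 and A := DF(p*) invertible. Let t and η̄ be given with 0 ≤ η̄ < t < 1. Then there exists ε > 0 such that: for every inexact Newton sequence (p_k) with forcing terms (η_k) satisfying η_k ≤ η̄ for all k, if ‖p_0 − p*‖ ≤ ε then the iterates contract in the weighted norm, namely ‖A (p_{k+1} − p*)‖ ≤ t ‖A (p_k − p*)‖ for all k ≥ 0. -/

import Mathlib

open Filter Topology

set_option maxHeartbeats 2000000
set_option synthInstance.maxHeartbeats 400000

/-- Inexact Newton iterates contract in the norm weighted by the Jacobian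
`A = DF(p*)` (Dembo–Eisenstat–Steihaug, Thm. 2.3). -/
theorem inexact_newton_weighted_contraction
    (n : ℕ) (F : EuclideanSpace ℝ (Fin n) → EuclideanSpace ℝ (Fin n))
    (pstar : EuclideanSpace ℝ (Fin n))
    (hF : ∃ U : Set (EuclideanSpace ℝ (Fin n)),
      IsOpen U ∧ pstar ∈ U ∧ ContDiffOn ℝ 1 F U)
    (hroot : F pstar = 0)
    (hinv : IsUnit (fderiv ℝ F pstar))
    (t ηbar : ℝ) (hηbar : 0 ≤ ηbar) (hηt : ηbar < t) (ht : t < 1) :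
    ∃ ε > (0:ℝ),
      ∀ (p : ℕ → EuclideanSpace ℝ (Fin n)) (η : ℕ → ℝ),
        (∀ k, 0 ≤ η k) →
        (∀ k, η k ≤ ηbar) →
        (∀ k, ‖F (p k) + (fderiv ℝ F (p k)) (p (k+1) - p k)‖ ≤ η k * ‖F (p k)‖) →
        ‖p 0 - pstar‖ ≤ ε →
        ∀ k, ‖(fderiv ℝ F pstar) (p (k+1) - pstar)‖ ≤
              t * ‖(fderiv ℝ F pstar) (p k - pstar)‖ := by
  classical
  obtain ⟨U, hU, hpU, hCD⟩ := hF
  set A : EuclideanSpace ℝ (Fin n) →L[ℝ] EuclideanSpace ℝ (Fin n) :=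
    fderiv ℝ F pstar with hA
  obtain ⟨u, hu⟩ := hinv
  set B : EuclideanSpace ℝ (Fin n) →L[ℝ] EuclideanSpace ℝ (Fin n) := ↑u⁻¹ with hB
  have hBA : ∀ v, B (A v) = v := by
    intro v
    have h1 : B * A = 1 := by rw [hB, ← hu]; exact u.inv_mul
    have h2 := congrArg (fun T : EuclideanSpace ℝ (Fin n) →L[ℝ] EuclideanSpace ℝ (Fin n) => T v) h1
    simpa using h2
  set a : ℝ := ‖A‖ with ha
  set b : ℝ := ‖B‖ with hb
  have ha0 : (0:ℝ) ≤ a := norm_nonneg _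
  have hb0 : (0:ℝ) ≤ b := norm_nonneg _
  have hnormv : ∀ v : EuclideanSpace ℝ (Fin n), ‖v‖ ≤ b * ‖A v‖ := by
    intro v
    calc ‖v‖ = ‖B (A v)‖ := by rw [hBA]
    _ ≤ b * ‖A v‖ := B.le_opNorm _
  set μ : ℝ := (t - ηbar) / (8 * (b + 1)) with hμdef
  have hμ : 0 < μ := by
    apply div_pos (by linarith) (by positivity)
  have hμb : μ * b ≤ (t - ηbar) / 8 := by
    rw [hμdef, div_mul_eq_mul_div, div_le_div_iff₀ (by positivity) (by norm_num)]
    nlinarith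
  have hμb2 : μ * b ≤ 1/2 := by linarith
  -- continuity of the derivative
  have hcont : ContinuousOn (fderiv ℝ F) U :=
    hCD.continuousOn_fderiv_of_isOpen hU le_rfl
  have hca : ContinuousAt (fderiv ℝ F) pstar := hcont.continuousAt (hU.mem_nhds hpU)
  have hev : ∀ᶠ x in 𝓝 pstar, ‖fderiv ℝ F x - A‖ ≤ μ ∧ x ∈ U := by
    have h1 : ∀ᶠ x in 𝓝 pstar, ‖fderiv ℝ F x - A‖ ≤ μ := by
      have h2 := hca (Metric.closedBall_mem_nhds A hμ)
      filter_upwards [h2] with x hx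
      simpa [dist_eq_norm] using hx
    exact h1.and (hU.mem_nhds hpU)
  obtain ⟨r', hr', hball⟩ := Metric.eventually_nhds_iff_ball.mp hev
  set r : ℝ := r' / 2 with hrdef
  have hr : 0 < r := by positivity
  have hrsub : ∀ x, ‖x - pstar‖ ≤ r → (‖fderiv ℝ F x - A‖ ≤ μ ∧ x ∈ U) := by
    intro x hx
    apply hball
    rw [Metric.mem_ball, dist_eq_norm]
    linarith
  -- Taylor-type estimate on the closed ball of radius r
  set s : Set (EuclideanSpace ℝ (Fin n)) := Metric.closedBall pstar r with hs
  have hps : pstar ∈ s := Metric.mem_closedBall_self hr.le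
  have hmem : ∀ x, x ∈ s ↔ ‖x - pstar‖ ≤ r := by
    intro x; rw [hs, Metric.mem_closedBall, dist_eq_norm]
  have hdiff : ∀ x ∈ s, HasFDerivWithinAt (fun y => F y - A (y - pstar))
      (fderiv ℝ F x - A) s x := by
    intro x hx
    have hxU : x ∈ U := (hrsub x ((hmem x).1 hx)).2
    have hFd : DifferentiableAt ℝ F x :=
      (hCD.differentiableOn one_ne_zero).differentiableAt (hU.mem_nhds hxU)
    have h2 : HasFDerivAt (fun y => A (y - pstar)) A x := by
      have h3 := (A.hasFDerivAt (x := x)).sub_const (A pstar)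
      simpa [map_sub] using h3
    exact ((hFd.hasFDerivAt.sub h2)).hasFDerivWithinAt
  have hTaylor : ∀ x, ‖x - pstar‖ ≤ r → ‖F x - A (x - pstar)‖ ≤ μ * ‖x - pstar‖ := by
    intro x hx
    have hxs : x ∈ s := (hmem x).2 hx
    have h4 := (convex_closedBall pstar r).norm_image_sub_le_of_norm_hasFDerivWithin_le
      hdiff (fun y hy => (hrsub y ((hmem y).1 hy)).1) hps hxs
    simpa [hroot] using h4
  -- main one-step contraction
  have key : ∀ x y : EuclideanSpace ℝ (Fin n), ‖x - pstar‖ ≤ r →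
      ‖F x + (fderiv ℝ F x) (y - x)‖ ≤ ηbar * ‖F x‖ →
      ‖A (y - pstar)‖ ≤ t * ‖A (x - pstar)‖ := by
    intro x y hxr hres
    set e : EuclideanSpace ℝ (Fin n) := x - pstar with he
    set d : EuclideanSpace ℝ (Fin n) := y - x with hd
    have h1 : ‖fderiv ℝ F x - A‖ ≤ μ := (hrsub x hxr).1
    have h2 : ‖F x - A e‖ ≤ μ * ‖e‖ := hTaylor x hxr
    have hbe : ‖e‖ ≤ b * ‖A e‖ := hnormv e
    have hAe : (0:ℝ) ≤ ‖A e‖ := norm_nonneg _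
    have hFx : ‖F x‖ ≤ (1 + μ*b) * ‖A e‖ := by
      have h5 : ‖F x‖ ≤ ‖A e‖ + μ * ‖e‖ := by
        calc ‖F x‖ = ‖A e + (F x - A e)‖ := by rw [add_sub_cancel]
        _ ≤ ‖A e‖ + ‖F x - A e‖ := norm_add_le _ _
        _ ≤ ‖A e‖ + μ * ‖e‖ := by linarith
      nlinarith [mul_le_mul_of_nonneg_left hbe hμ.le]
    have hFx0 : (0:ℝ) ≤ ‖F x‖ := norm_nonneg _
    have hDFd : ‖(fderiv ℝ F x) d‖ ≤ (1 + ηbar) * ‖F x‖ := by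
      calc ‖(fderiv ℝ F x) d‖ = ‖(F x + (fderiv ℝ F x) d) - F x‖ := by
            rw [add_sub_cancel_left]
      _ ≤ ‖F x + (fderiv ℝ F x) d‖ + ‖F x‖ := norm_sub_le _ _
      _ ≤ ηbar * ‖F x‖ + ‖F x‖ := by linarith
      _ = (1 + ηbar) * ‖F x‖ := by ring
    have hd_bound : ‖d‖ ≤ b * ‖A d‖ := hnormv d
    have hAd1 : ‖A d‖ ≤ (1+ηbar)*‖F x‖ + μ * ‖d‖ := by
      calc ‖A d‖ = ‖(fderiv ℝ F x) d + (A - fderiv ℝ F x) d‖ := by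
            simp [ContinuousLinearMap.sub_apply]
      _ ≤ ‖(fderiv ℝ F x) d‖ + ‖(A - fderiv ℝ F x) d‖ := norm_add_le _ _
      _ ≤ (1+ηbar)*‖F x‖ + ‖A - fderiv ℝ F x‖ * ‖d‖ := by
            gcongr
            exact (A - fderiv ℝ F x).le_opNorm _
      _ ≤ (1+ηbar)*‖F x‖ + μ * ‖d‖ := by
            have h6 : ‖A - fderiv ℝ F x‖ = ‖fderiv ℝ F x - A‖ := norm_sub_rev _ _
            nlinarith [norm_nonneg d]
    have hAd : ‖A d‖ ≤ 2*(1+ηbar)*‖F x‖ := by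
      nlinarith [mul_le_mul_of_nonneg_left hd_bound hμ.le,
        mul_le_mul_of_nonneg_right hμb2 (norm_nonneg (A d))]
    have hd2 : ‖d‖ ≤ 2*b*(1+ηbar)*((1+μ*b)*‖A e‖) := by
      calc ‖d‖ ≤ b * ‖A d‖ := hd_bound
      _ ≤ b * (2*(1+ηbar)*‖F x‖) := by
            exact mul_le_mul_of_nonneg_left hAd hb0
      _ ≤ b * (2*(1+ηbar)*((1 + μ*b) * ‖A e‖)) := by
            have h8 : 2*(1+ηbar)*‖F x‖ ≤ 2*(1+ηbar)*((1+μ*b)*‖A e‖) :=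
              mul_le_mul_of_nonneg_left hFx (by linarith)
            exact mul_le_mul_of_nonneg_left h8 hb0
      _ = 2*b*(1+ηbar)*((1+μ*b)*‖A e‖) := by ring
    have hid : A (y - pstar) = (F x + (fderiv ℝ F x) d) + (A - fderiv ℝ F x) d
        + (A e - F x) := by
      have h7 : y - pstar = e + d := by rw [he, hd]; abel
      rw [h7, map_add]
      simp only [ContinuousLinearMap.sub_apply]
      abel
    have hfinal : ‖A (y - pstar)‖ ≤ ηbar*‖F x‖ + μ*‖d‖ + μ*‖e‖ := by
      have b2 : ‖(A - fderiv ℝ F x) d‖ ≤ μ * ‖d‖ := by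
        calc ‖(A - fderiv ℝ F x) d‖ ≤ ‖A - fderiv ℝ F x‖ * ‖d‖ :=
              (A - fderiv ℝ F x).le_opNorm _
        _ ≤ μ * ‖d‖ := by
              have h6 : ‖A - fderiv ℝ F x‖ = ‖fderiv ℝ F x - A‖ := norm_sub_rev _ _
              nlinarith [norm_nonneg d]
      have b3 : ‖A e - F x‖ ≤ μ * ‖e‖ := by rw [norm_sub_rev]; exact h2
      rw [hid]
      exact (norm_add₃_le).trans (by linarith)
    have hcoef : ηbar*(1+μ*b) + μ*(2*b*(1+ηbar)*(1+μ*b)) + μ*b ≤ t := by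
      have hc0 : 0 ≤ μ*b := mul_nonneg hμ.le hb0
      have hη1 : ηbar < 1 := lt_trans hηt ht
      nlinarith [hμb, hc0, hμb2, mul_le_mul_of_nonneg_left hμb2 hc0,
        mul_le_mul_of_nonneg_left hμb hc0,
        mul_nonneg (by linarith : (0:ℝ) ≤ 1 - ηbar) hc0,
        mul_le_mul_of_nonneg_left hμb2 (mul_nonneg hc0 hηbar)]
    calc ‖A (y - pstar)‖ ≤ ηbar*‖F x‖ + μ*‖d‖ + μ*‖e‖ := hfinal
    _ ≤ ηbar*((1+μ*b)*‖A e‖) + μ*(2*b*(1+ηbar)*((1+μ*b)*‖A e‖)) + μ*(b*‖A e‖) := by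
        have c1 := mul_le_mul_of_nonneg_left hFx hηbar
        have c2 := mul_le_mul_of_nonneg_left hd2 hμ.le
        have c3 := mul_le_mul_of_nonneg_left hbe hμ.le
        linarith
    _ = (ηbar*(1+μ*b) + μ*(2*b*(1+ηbar)*(1+μ*b)) + μ*b) * ‖A e‖ := by ring
    _ ≤ t * ‖A e‖ := mul_le_mul_of_nonneg_right hcoef hAe
  -- choose ε and conclude
  refine ⟨r / ((a+1)*(b+1)), by positivity, ?_⟩
  intro p η hη0 hηb hres hp0
  set ε : ℝ := r / ((a+1)*(b+1)) with hε
  have hε0 : (0:ℝ) ≤ ε := by positivity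
  have hεr : b * (a * ε) ≤ r := by
    have h1 : a*b ≤ (a+1)*(b+1) := by nlinarith
    calc b * (a * ε) = (a*b)*ε := by ring
    _ ≤ ((a+1)*(b+1))*ε := mul_le_mul_of_nonneg_right h1 hε0
    _ = r := by
        rw [hε]
        field_simp
  have hres' : ∀ k, ‖F (p k) + fderiv ℝ F (p k) (p (k+1) - p k)‖ ≤ ηbar * ‖F (p k)‖ := by
    intro k
    exact (hres k).trans (mul_le_mul_of_nonneg_right (hηb k) (norm_nonneg _))
  have inv : ∀ k, ‖A (p k - pstar)‖ ≤ a * ε := by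
    intro k
    induction k with
    | zero =>
      calc ‖A (p 0 - pstar)‖ ≤ a * ‖p 0 - pstar‖ := A.le_opNorm _
      _ ≤ a * ε := mul_le_mul_of_nonneg_left hp0 ha0
    | succ k ih =>
      have hk : ‖p k - pstar‖ ≤ r :=
        le_trans (le_trans (hnormv _) (mul_le_mul_of_nonneg_left ih hb0)) hεr
      calc ‖A (p (k+1) - pstar)‖ ≤ t * ‖A (p k - pstar)‖ :=
            key (p k) (p (k+1)) hk (hres' k)
      _ ≤ 1 * (a*ε) := mul_le_mul ht.le ih (norm_nonneg _) zero_le_one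
      _ = a*ε := one_mul _
  intro k
  have hk : ‖p k - pstar‖ ≤ r :=
    le_trans (le_trans (hnormv _) (mul_le_mul_of_nonneg_left (inv k) hb0)) hεr
  exact key (p k) (p (k+1)) hk (hres' k)
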